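/- Let n ≥ 2 be an integer, k an index in Fin n, and set γ = 2(n−1)·log(3/8) (a negative real), β = e^γ − 1, and α = (e^γ − 1)/γ. Let μ be the product over Fin n of the uniform probability measure on [−π, π]. Define the tilted gradient g_γ : (Fin n → ℝ) → ℝ by g_γ(θ) = α·(1/2)·sin(θ_k)·B(θ) / ( e^γ + (1 − e^γ)·cos²(θ_k/2)·B(θ) ), where B(θ) = ∏_{j ≠ k} cos²(θ_j/2). Then ∫ g_γ² dμ ≥ (25/512) · 1/( (log(3/8))² · (n−1)² ); in particular, under this linear negative tilt schedule the gradient variance is Ω(1/n²) rather than exponentially small in n. -/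

import Mathlib

open MeasureTheory Finset

section Aux

open Real intervalIntegral

theorem key_integral_aux (a b : ℝ) (hb : 0 < b) (hab : b < a) :
    ∫ x in (-π)..π, Real.sin x ^ 2 / (a + b * Real.cos x) ^ 2
      = 2 * π * (a / Real.sqrt (a ^ 2 - b ^ 2) - 1) / b ^ 2 := by
  have hd : (0:ℝ) < a ^ 2 - b ^ 2 := by nlinarith
  set R := Real.sqrt (a ^ 2 - b ^ 2) with hRdef
  have hR : 0 < R := Real.sqrt_pos.2 hd
  have hR2 : R ^ 2 = a ^ 2 - b ^ 2 := Real.sq_sqrt hd.le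
  have hu : ∀ θ : ℝ, 0 < a + b * Real.cos θ := by
    intro θ; nlinarith [Real.neg_one_le_cos θ]
  have hM : ∀ θ : ℝ, 0 < a + R + b * Real.cos θ := by
    intro θ; nlinarith [Real.neg_one_le_cos θ]
  set H : ℝ → ℝ := fun θ =>
    (1 / b) * (Real.sin θ / (a + b * Real.cos θ)) - θ / b ^ 2
      + (a / (b ^ 2 * R)) * (θ - 2 * Real.arctan (b * Real.sin θ / (a + R + b * Real.cos θ)))
    with hHdef
  have hderiv : ∀ θ : ℝ, HasDerivAt H (Real.sin θ ^ 2 / (a + b * Real.cos θ) ^ 2) θ := by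
    intro θ
    have hu0 := hu θ
    have hu' := (hu θ).ne'
    have hM' := (hM θ).ne'
    have haR : (0:ℝ) < a + R := by linarith
    set s := Real.sin θ with hsdef
    set c := Real.cos θ with hc
    have hs : s ^ 2 = 1 - c ^ 2 := Real.sin_sq θ
    have h1 : HasDerivAt (fun θ => Real.sin θ / (a + b * Real.cos θ))
        ((c * (a + b * c) - s * (b * -s)) / (a + b * c) ^ 2) θ :=
      (Real.hasDerivAt_sin θ).div
        (((Real.hasDerivAt_cos θ).const_mul b).const_add a) hu'
    have h2 : HasDerivAt (fun θ => b * Real.sin θ / (a + R + b * Real.cos θ))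
        ((b * c * (a + R + b * c) - b * s * (b * -s)) / (a + R + b * c) ^ 2) θ :=
      ((Real.hasDerivAt_sin θ).const_mul b).div
        (((Real.hasDerivAt_cos θ).const_mul b).const_add (a + R)) hM'
    have h3 : HasDerivAt (fun θ => Real.arctan (b * Real.sin θ / (a + R + b * Real.cos θ)))
        ((1 / (1 + (b * s / (a + R + b * c)) ^ 2)) *
          ((b * c * (a + R + b * c) - b * s * (b * -s)) / (a + R + b * c) ^ 2)) θ :=
      (Real.hasDerivAt_arctan _).comp θ h2
    have h4 : HasDerivAt H
        ((1 / b) * ((c * (a + b * c) - s * (b * -s)) / (a + b * c) ^ 2) - 1 / b ^ 2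
          + (a / (b ^ 2 * R)) * (1 - 2 *
            ((1 / (1 + (b * s / (a + R + b * c)) ^ 2)) *
            ((b * c * (a + R + b * c) - b * s * (b * -s)) / (a + R + b * c) ^ 2)))) θ :=
      (((h1.const_mul (1/b)).sub ((hasDerivAt_id θ).div_const (b^2))).add
        (((hasDerivAt_id θ).sub (h3.const_mul 2)).const_mul (a / (b ^ 2 * R))))
    have hMN : (a + R + b * c) ^ 2 + (b * s) ^ 2 = 2 * (a + R) * (a + b * c) := by
      nlinarith [hs, hR2]
    have hnum : b * c * (a + R + b * c) - b * s * (b * -s) = b * (a + R) * c + b ^ 2 := by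
      linear_combination (b^2) * hs
    have e1 : 1 + (b * s / (a + R + b * c)) ^ 2
        = (2 * (a + R) * (a + b * c)) / (a + R + b * c) ^ 2 := by
      rw [← hMN]; field_simp
    have v2 : (1 / (1 + (b * s / (a + R + b * c)) ^ 2)) *
          ((b * c * (a + R + b * c) - b * s * (b * -s)) / (a + R + b * c) ^ 2)
        = (b * (a + R) * c + b ^ 2) / (2 * (a + R) * (a + b * c)) := by
      rw [hnum, e1, one_div_div]
      rw [div_mul_div_comm, mul_comm (2 * (a + R) * (a + b * c)) ((a + R + b * c) ^ 2),
        mul_div_mul_left _ _ (pow_ne_zero 2 hM')]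
    have v3 : 1 - 2 * ((b * (a + R) * c + b ^ 2) / (2 * (a + R) * (a + b * c)))
        = R / (a + b * c) := by
      field_simp
      linear_combination (-1) * hR2
    rw [v2, v3] at h4
    convert h4 using 1
    field_simp
    ring
  have hcont : Continuous fun x : ℝ => Real.sin x ^ 2 / (a + b * Real.cos x) ^ 2 := by
    apply Continuous.div (by fun_prop) (by fun_prop)
    intro x; exact pow_ne_zero 2 (hu x).ne'
  rw [integral_eq_sub_of_hasDerivAt (fun x _ => hderiv x)
    (hcont.intervalIntegrable _ _)]
  rw [hHdef]
  simp only [Real.sin_pi, Real.cos_pi, Real.sin_neg, Real.cos_neg, neg_zero, mul_zero,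
    zero_div, Real.arctan_zero]
  field_simp
  ring

theorem phi_bound_aux (s B : ℝ) (hs0 : 0 < s) (hs1 : s < 1) (hB0 : 0 ≤ B) (hB1 : B ≤ 1) :
    ((1 - s) ^ 2 / (2 * s)) * B ^ 2
      ≤ (s ^ 2 + (1 - s ^ 2) * B / 2) / Real.sqrt (s ^ 2 * (s ^ 2 + (1 - s ^ 2) * B)) - 1 := by
  have hP : 0 < s ^ 2 * (s ^ 2 + (1 - s ^ 2) * B) := by
    have h1 : 0 < s ^ 2 := by positivity
    have h2 : 0 ≤ (1 - s ^ 2) * B := mul_nonneg (by nlinarith) hB0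
    exact mul_pos h1 (by linarith)
  set r := Real.sqrt (s ^ 2 * (s ^ 2 + (1 - s ^ 2) * B)) with hrdef
  have hr0 : 0 < r := Real.sqrt_pos.2 hP
  have hr2 : r ^ 2 = s ^ 2 * (s ^ 2 + (1 - s ^ 2) * B) := Real.sq_sqrt hP.le
  set K : ℝ := (1 - s) ^ 2 / (2 * s) with hKdef
  have hK0 : 0 ≤ K := by positivity
  have hsq : (r * (1 + K * B ^ 2)) ^ 2 * (4 * s ^ 2)
      = (s ^ 2 * (s ^ 2 + (1 - s ^ 2) * B)) *
        (4 * s ^ 2 + 4 * s * (1 - s) ^ 2 * B ^ 2 + (1 - s) ^ 4 * B ^ 4) := by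
    rw [mul_pow, hr2, hKdef]
    field_simp
    ring
  have iden : (s ^ 2 + (1 - s ^ 2) * B / 2) ^ 2 * (4 * s ^ 2)
      - (s ^ 2 * (s ^ 2 + (1 - s ^ 2) * B)) *
        (4 * s ^ 2 + 4 * s * (1 - s) ^ 2 * B ^ 2 + (1 - s) ^ 4 * B ^ 4)
      = s ^ 2 * B ^ 2 * (1 - B) * ((1 - s) ^ 3 * (1 + 3 * s + 4 * s ^ 2)
          + (1 - s) ^ 4 * B + (1 - s) ^ 5 * (1 + s) * B ^ 2) := by
    ring
  have hpos : 0 ≤ s ^ 2 * B ^ 2 * (1 - B) * ((1 - s) ^ 3 * (1 + 3 * s + 4 * s ^ 2)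
          + (1 - s) ^ 4 * B + (1 - s) ^ 5 * (1 + s) * B ^ 2) := by
    have h1 : (0:ℝ) ≤ 1 - B := by linarith
    have h2 : (0:ℝ) ≤ 1 - s := by linarith
    positivity
  have hA0 : 0 ≤ s ^ 2 + (1 - s ^ 2) * B / 2 := by nlinarith
  have hC0 : 0 ≤ r * (1 + K * B ^ 2) := by positivity
  have h4s : (0:ℝ) < 4 * s ^ 2 := by positivity
  have hAC : (r * (1 + K * B ^ 2)) ^ 2 ≤ (s ^ 2 + (1 - s ^ 2) * B / 2) ^ 2 := by
    have h' : (r * (1 + K * B ^ 2)) ^ 2 * (4 * s ^ 2)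
        ≤ (s ^ 2 + (1 - s ^ 2) * B / 2) ^ 2 * (4 * s ^ 2) := by
      rw [hsq]; linarith [iden, hpos]
    exact le_of_mul_le_mul_right h' h4s
  have hle : r * (1 + K * B ^ 2) ≤ s ^ 2 + (1 - s ^ 2) * B / 2 := by
    have h2 := Real.sqrt_le_sqrt hAC
    rwa [Real.sqrt_sq hC0, Real.sqrt_sq hA0] at h2
  rw [le_sub_iff_add_le, le_div_iff₀ hr0]
  calc (K * B ^ 2 + 1) * r = r * (1 + K * B ^ 2) := by ring
    _ ≤ _ := hle

end Aux

section Aux2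

open Real intervalIntegral

theorem cos_sq_half_aux (x : ℝ) : Real.cos (x / 2) ^ 2 = (1 + Real.cos x) / 2 := by
  have h := Real.cos_sq (x / 2)
  rw [show 2 * (x / 2) = x by ring] at h
  linarith

theorem cos4_interval_aux : ∫ x in (-π)..π, Real.cos (x / 2) ^ 4 = 3 * π / 4 := by
  have hd : ∀ x : ℝ, HasDerivAt (fun x : ℝ => 3 * x / 8 + Real.sin x / 2 + Real.sin (2 * x) / 16)
      (Real.cos (x / 2) ^ 4) x := by
    intro x
    have h1 : HasDerivAt (fun x : ℝ => 3 * x / 8) (3 / 8) x := by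
      simpa using ((hasDerivAt_id x).const_mul (3:ℝ)).div_const 8
    have h2 : HasDerivAt (fun x : ℝ => Real.sin x / 2) (Real.cos x / 2) x :=
      (Real.hasDerivAt_sin x).div_const 2
    have h3 : HasDerivAt (fun x : ℝ => Real.sin (2 * x) / 16)
        ((Real.cos (2 * x) * 2) / 16) x := by
      have := (Real.hasDerivAt_sin (2 * x)).comp x
        (by simpa using (hasDerivAt_id x).const_mul (2:ℝ))
      exact this.div_const 16
    have h4 := (h1.add h2).add h3
    refine h4.congr_deriv ?_
    have e1 := cos_sq_half_aux x
    have e2 := Real.cos_two_mul x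
    have : Real.cos (x / 2) ^ 4 = ((1 + Real.cos x) / 2) ^ 2 := by
      rw [show (4:ℕ) = 2 * 2 by norm_num, pow_mul, e1]
    rw [this, e2]
    ring
  rw [integral_eq_sub_of_hasDerivAt (fun x _ => hd x)
    ((by fun_prop : Continuous fun x : ℝ => Real.cos (x / 2) ^ 4).intervalIntegrable _ _)]
  have : (2 : ℝ) * -π = -(2 * π) := by ring
  rw [this]
  simp [Real.sin_two_pi, Real.sin_pi]
  ring

theorem integral_pi_pow_aux {N : ℕ} (ν : Measure ℝ) [IsProbabilityMeasure ν] (f : ℝ → ℝ)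
    (hf : Integrable f ν) :
    ∫ y : Fin N → ℝ, ∏ j, f (y j) ∂(Measure.pi fun _ => ν) = (∫ t, f t ∂ν) ^ N := by
  induction N with
  | zero => simp
  | succ n ih =>
      have h := ((measurePreserving_piFinSuccAbove (fun _ : Fin (n + 1) => ν) 0).symm)
      rw [← h.integral_comp']
      simp_rw [MeasurableEquiv.piFinSuccAbove_symm_apply, Fin.insertNthEquiv,
        Equiv.coe_fn_mk, Fin.insertNth_zero, Fin.prod_univ_succ, Fin.cons_zero, Fin.cons_succ]
      simp only [Fin.zero_succAbove, cast_eq]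
      rw [MeasureTheory.integral_prod_mul (f := f) (g := fun y : Fin n → ℝ => ∏ j, f (y j)),
        ih, pow_succ]
      ring

theorem prod_erase_eq_aux {N : ℕ} (k : Fin (N + 1)) (f : Fin (N + 1) → ℝ) :
    ∏ j ∈ Finset.univ.erase k, f j = ∏ j : Fin N, f (k.succAbove j) := by
  have himg : Finset.univ.erase k = Finset.image k.succAbove Finset.univ := by
    ext j
    simp only [Finset.mem_erase, Finset.mem_univ, and_true, Finset.mem_image, true_and]
    rw [show (∃ a, k.succAbove a = j) ↔ j ≠ k from Fin.exists_succAbove_eq_iff]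
  rw [himg, Finset.prod_image (fun a _ b _ h => Fin.succAbove_right_injective h)]

end Aux2

set_option maxHeartbeats 1000000 in
/-- **Polynomial gradient-variance lower bound under a linear negative tilt schedule.** For
`n ≥ 2`, `γ = 2(n−1)·log(3/8)` and `α = (e^γ − 1)/γ`, the tilted gradient
`g_γ(θ) = α·(1/2)·sin(θ k)·B(θ) / (e^γ + (1 − e^γ)·cos²(θ k/2)·B(θ))` with
`B(θ) = ∏_{j ≠ k} cos²(θ j / 2)` satisfies
`∫ g_γ² dμ ≥ (25/512)·1/((log(3/8))²·(n−1)²)` under the product of uniform measures on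
`[−π, π]`; in particular the gradient variance is `Ω(1/n²)`. -/
theorem tilted_gradient_variance_lower_bound (n : ℕ) (hn : 2 ≤ n) (k : Fin n)
    (γ : ℝ) (hγdef : γ = 2 * ((n : ℝ) - 1) * Real.log (3 / 8))
    (α : ℝ) (hαdef : α = (Real.exp γ - 1) / γ) :
    (25 / 512) * (1 / ((Real.log (3 / 8)) ^ 2 * ((n : ℝ) - 1) ^ 2)) ≤
      ∫ θ : Fin n → ℝ,
        (α * ((1 / 2) * Real.sin (θ k)) * (∏ j ∈ univ.erase k, Real.cos (θ j / 2) ^ 2) /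
          (Real.exp γ + (1 - Real.exp γ) * Real.cos (θ k / 2) ^ 2 *
            ∏ j ∈ univ.erase k, Real.cos (θ j / 2) ^ 2)) ^ 2
        ∂(Measure.pi fun _ : Fin n =>
          (ENNReal.ofReal (1 / (2 * Real.pi))) •
            (volume.restrict (Set.Icc (-Real.pi) Real.pi))) := by
  obtain ⟨N, rfl⟩ : ∃ N : ℕ, n = N + 1 := ⟨n - 1, by omega⟩
  have hN1 : 1 ≤ N := by omega
  have hNR : (1:ℝ) ≤ (N:ℝ) := by exact_mod_cast hN1
  have hcast : ((N + 1 : ℕ) : ℝ) - 1 = (N : ℝ) := by push_cast; ring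
  rw [hcast] at hγdef ⊢
  set L := Real.log (3 / 8) with hL
  have hLneg : L < 0 := Real.log_neg (by norm_num) (by norm_num)
  have hγ : γ = 2 * N * L := hγdef
  have hγneg : γ < 0 := by rw [hγ]; nlinarith
  have hγne : γ ≠ 0 := ne_of_lt hγneg
  set E := Real.exp γ with hE
  set s : ℝ := (3 / 8 : ℝ) ^ N with hs
  have hsE : E = s ^ 2 := by
    rw [hE, hγ, hs, show (2:ℝ) * N * L = (N:ℝ) * (2 * L) by ring, Real.exp_nat_mul,
      show (2:ℝ) * L = ((2:ℕ):ℝ) * L by norm_num, Real.exp_nat_mul,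
      Real.exp_log (by norm_num : (0:ℝ) < 3/8)]
    rw [← pow_mul, ← pow_mul, Nat.mul_comm]
  have hs0 : 0 < s := by positivity
  have hs38 : s ≤ 3 / 8 := by
    calc s = (3/8:ℝ) ^ N := hs
      _ ≤ (3/8:ℝ) ^ 1 := pow_le_pow_of_le_one (by norm_num) (by norm_num) hN1
      _ = 3/8 := pow_one _
  have hs1 : s < 1 := lt_of_le_of_lt hs38 (by norm_num)
  have hE0 : 0 < E := Real.exp_pos γ
  have hE1 : E < 1 := by rw [hsE]; nlinarith
  have hαsq : α ^ 2 = (1 - E) ^ 2 / γ ^ 2 := by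
    rw [hαdef, div_pow]
    congr 1
    ring
  set μ1 : Measure ℝ := (ENNReal.ofReal (1 / (2 * Real.pi))) •
      (volume.restrict (Set.Icc (-Real.pi) Real.pi)) with hμ1
  have hπ : (0:ℝ) < Real.pi := Real.pi_pos
  haveI hP1 : IsProbabilityMeasure μ1 := by
    constructor
    rw [hμ1, Measure.smul_apply, Measure.restrict_apply MeasurableSet.univ,
      Set.univ_inter, Real.volume_Icc, smul_eq_mul,
      show Real.pi - -Real.pi = 2 * Real.pi by ring,
      ← ENNReal.ofReal_mul (by positivity)]
    rw [show 1 / (2 * Real.pi) * (2 * Real.pi) = 1 by field_simp]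
    exact ENNReal.ofReal_one
  have hμint : ∀ f : ℝ → ℝ, ∫ x, f x ∂μ1
      = (1 / (2 * Real.pi)) * ∫ x in (-Real.pi)..Real.pi, f x := by
    intro f
    rw [hμ1, integral_smul_measure, ENNReal.toReal_ofReal (by positivity),
      intervalIntegral.integral_of_le (by linarith), smul_eq_mul]
    congr 1
    exact MeasureTheory.integral_Icc_eq_integral_Ioc
  have hcos4c : Continuous fun x : ℝ => Real.cos (x / 2) ^ 4 := by fun_prop
  have hcos4_int : Integrable (fun x : ℝ => Real.cos (x / 2) ^ 4) μ1 := by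
    refine ⟨hcos4c.aestronglyMeasurable, HasFiniteIntegral.of_bounded (C := 1)
      (Filter.Eventually.of_forall fun x => ?_)⟩
    rw [Real.norm_eq_abs, abs_of_nonneg (by positivity)]
    nlinarith [Real.cos_sq_le_one (x / 2), sq_nonneg (Real.cos (x / 2))]
  have hcos4 : ∫ x, Real.cos (x / 2) ^ 4 ∂μ1 = 3 / 8 := by
    rw [hμint, cos4_interval_aux]
    field_simp
    ring
  -- the measurable equivalence peeling off coordinate k
  set e := MeasurableEquiv.piFinSuccAbove (fun _ : Fin (N + 1) => ℝ) k with he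
  have hmp := (measurePreserving_piFinSuccAbove (fun _ : Fin (N + 1) => μ1) k).symm
  set ν := Measure.pi fun _ : Fin N => μ1 with hν
  set G : ℝ × (Fin N → ℝ) → ℝ := fun p =>
    (α * ((1 / 2) * Real.sin p.1) * (∏ j, Real.cos (p.2 j / 2) ^ 2) /
      (E + (1 - E) * Real.cos (p.1 / 2) ^ 2 * ∏ j, Real.cos (p.2 j / 2) ^ 2)) ^ 2 with hG
  have hGeq : ∀ p : ℝ × (Fin N → ℝ),
      (α * ((1 / 2) * Real.sin (e.symm p k)) *
          (∏ j ∈ univ.erase k, Real.cos (e.symm p j / 2) ^ 2) /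
        (E + (1 - E) * Real.cos (e.symm p k / 2) ^ 2 *
          ∏ j ∈ univ.erase k, Real.cos (e.symm p j / 2) ^ 2)) ^ 2 = G p := by
    intro p
    have h1 : e.symm p k = p.1 := by
      simp [he, MeasurableEquiv.piFinSuccAbove_symm_apply, Fin.insertNthEquiv]
    have h2 : ∏ j ∈ univ.erase k, Real.cos (e.symm p j / 2) ^ 2
        = ∏ j, Real.cos (p.2 j / 2) ^ 2 := by
      rw [prod_erase_eq_aux k (fun j => Real.cos (e.symm p j / 2) ^ 2)]
      refine Finset.prod_congr rfl fun j _ => ?_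
      simp [he, MeasurableEquiv.piFinSuccAbove_symm_apply, Fin.insertNthEquiv]
    rw [h1, h2, hG]
  -- positivity facts
  have hBnn : ∀ y : Fin N → ℝ, 0 ≤ ∏ j, Real.cos (y j / 2) ^ 2 :=
    fun y => Finset.prod_nonneg fun j _ => sq_nonneg _
  have hBle1 : ∀ y : Fin N → ℝ, ∏ j, Real.cos (y j / 2) ^ 2 ≤ 1 :=
    fun y => Finset.prod_le_one (fun j _ => sq_nonneg _)
      (fun j _ => Real.cos_sq_le_one _)
  have hdenlb : ∀ (x : ℝ) (B : ℝ), 0 ≤ B →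
      E ≤ E + (1 - E) * Real.cos (x / 2) ^ 2 * B := by
    intro x B hB
    nlinarith [sq_nonneg (Real.cos (x / 2)),
      mul_nonneg (mul_nonneg (by linarith : (0:ℝ) ≤ 1 - E) (sq_nonneg (Real.cos (x / 2)))) hB]
  have hGc : Continuous G := by
    apply Continuous.pow
    apply Continuous.div (by fun_prop) (by fun_prop)
    intro p
    exact (lt_of_lt_of_le hE0 (hdenlb p.1 _ (hBnn p.2))).ne'
  have hGbd : ∀ p : ℝ × (Fin N → ℝ), ‖G p‖ ≤ (|α| * (1 / 2) / E) ^ 2 := by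
    intro p
    have hq : |α * ((1 / 2) * Real.sin p.1) * (∏ j, Real.cos (p.2 j / 2) ^ 2) /
        (E + (1 - E) * Real.cos (p.1 / 2) ^ 2 * ∏ j, Real.cos (p.2 j / 2) ^ 2)|
        ≤ |α| * (1 / 2) / E := by
      rw [abs_div, abs_of_pos (lt_of_lt_of_le hE0 (hdenlb p.1 _ (hBnn p.2)))]
      apply div_le_div₀ (by positivity) ?_ hE0 (hdenlb p.1 _ (hBnn p.2))
      rw [abs_mul, abs_mul, abs_of_nonneg (hBnn p.2), abs_mul, abs_of_nonneg
        (by norm_num : (0:ℝ) ≤ (1:ℝ)/2)]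
      calc |α| * (1 / 2 * |Real.sin p.1|) * ∏ j, Real.cos (p.2 j / 2) ^ 2
          ≤ |α| * (1 / 2 * 1) * 1 := by
            gcongr
            · exact Real.abs_sin_le_one p.1
            · exact hBle1 p.2
        _ = |α| * (1 / 2) := by ring
    calc ‖G p‖ = |G p| := Real.norm_eq_abs _
      _ = G p := abs_of_nonneg (by simp only [hG]; positivity)
      _ = |(α * ((1 / 2) * Real.sin p.1) * (∏ j, Real.cos (p.2 j / 2) ^ 2) /
          (E + (1 - E) * Real.cos (p.1 / 2) ^ 2 * ∏ j, Real.cos (p.2 j / 2) ^ 2))| ^ 2 := by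
            simp only [hG]; rw [sq_abs]
      _ ≤ (|α| * (1 / 2) / E) ^ 2 := pow_le_pow_left₀ (abs_nonneg _) hq 2
  have hGint : Integrable G (μ1.prod ν) :=
    ⟨hGc.aestronglyMeasurable,
      HasFiniteIntegral.of_bounded (Filter.Eventually.of_forall hGbd)⟩
  set C : ℝ := α ^ 2 / (1 - E) ^ 2 * ((1 - s) ^ 2 / (2 * s)) with hC
  -- inner integral lower bound
  have hinner : ∀ y : Fin N → ℝ,
      C * ∏ j, Real.cos (y j / 2) ^ 4 ≤ ∫ x, G (x, y) ∂μ1 := by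
    intro y
    have hprodpow : ∏ j, Real.cos (y j / 2) ^ 4 = (∏ j, Real.cos (y j / 2) ^ 2) ^ 2 := by
      rw [← Finset.prod_pow]
      exact Finset.prod_congr rfl fun j _ => by ring
    rw [hprodpow]
    set B := ∏ j, Real.cos (y j / 2) ^ 2 with hB
    have hB0 : 0 ≤ B := hBnn y
    have hB1 : B ≤ 1 := hBle1 y
    rcases eq_or_lt_of_le hB0 with h0 | hBpos
    · have hz : ∀ x : ℝ, G (x, y) = 0 := by
        intro x
        rw [hG]
        simp only [← hB, ← h0, mul_zero, zero_div, ne_eq, OfNat.ofNat_ne_zero,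
          not_false_eq_true, zero_pow]
      rw [show (fun x => G (x, y)) = fun _ : ℝ => (0:ℝ) from funext hz, integral_zero, ← h0]
      norm_num
    · set a := E + (1 - E) * B / 2 with ha
      set b := (1 - E) * B / 2 with hb
      have h1E : (0:ℝ) < 1 - E := by linarith
      have hb0 : 0 < b := by rw [hb]; positivity
      have hba : b < a := by rw [ha, hb]; linarith
      have hpt : ∀ x : ℝ, G (x, y)
          = (α ^ 2 * B ^ 2 / 4) * (Real.sin x ^ 2 / (a + b * Real.cos x) ^ 2) := by
        intro x
        rw [hG]
        simp only [← hB]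
        have hdeq : E + (1 - E) * Real.cos (x / 2) ^ 2 * B = a + b * Real.cos x := by
          rw [cos_sq_half_aux x, ha, hb]; ring
        rw [hdeq, div_pow, show (α * ((1 / 2) * Real.sin x) * B) ^ 2
          = α ^ 2 * B ^ 2 / 4 * Real.sin x ^ 2 by ring, mul_div_assoc]
      rw [show (fun x => G (x, y))
        = fun x => (α ^ 2 * B ^ 2 / 4) * (Real.sin x ^ 2 / (a + b * Real.cos x) ^ 2)
        from funext hpt]
      rw [hμint, intervalIntegral.integral_const_mul, key_integral_aux a b hb0 hba]
      have harg : a ^ 2 - b ^ 2 = s ^ 2 * (s ^ 2 + (1 - s ^ 2) * B) := by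
        rw [ha, hb, hsE]; ring
      have haeq : a = s ^ 2 + (1 - s ^ 2) * B / 2 := by
        rw [ha, hsE]; linear_combination hb - (B / 2) * hsE
      rw [harg, haeq]
      set Φ := (s ^ 2 + (1 - s ^ 2) * B / 2) /
          Real.sqrt (s ^ 2 * (s ^ 2 + (1 - s ^ 2) * B)) - 1 with hΦ
      have hphi : ((1 - s) ^ 2 / (2 * s)) * B ^ 2 ≤ Φ := phi_bound_aux s B hs0 hs1 hB0 hB1
      have hquarter : (0:ℝ) ≤ α ^ 2 / (1 - E) ^ 2 := by positivity
      calc C * B ^ 2 = (α ^ 2 / (1 - E) ^ 2) * (((1 - s) ^ 2 / (2 * s)) * B ^ 2) := by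
            rw [hC]; ring
        _ ≤ (α ^ 2 / (1 - E) ^ 2) * Φ := mul_le_mul_of_nonneg_left hphi hquarter
        _ = 1 / (2 * Real.pi) * (α ^ 2 * B ^ 2 / 4 * (2 * Real.pi * Φ / b ^ 2)) := by
            rw [hb]
            have hBne : B ≠ 0 := hBpos.ne'
            have h1Ene : (1 - E) ≠ 0 := h1E.ne'
            field_simp
            ring
  -- outer integral
  have hlow_int : Integrable (fun y : Fin N → ℝ => C * ∏ j, Real.cos (y j / 2) ^ 4) ν := by
    apply Integrable.const_mul
    refine ⟨(by fun_prop : Continuous fun y : Fin N → ℝ =>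
        ∏ j, Real.cos (y j / 2) ^ 4).aestronglyMeasurable,
      HasFiniteIntegral.of_bounded (C := 1) (Filter.Eventually.of_forall fun y => ?_)⟩
    rw [Real.norm_eq_abs, abs_of_nonneg (Finset.prod_nonneg fun j _ => by positivity)]
    exact Finset.prod_le_one (fun j _ => by positivity)
      (fun j _ => by nlinarith [Real.cos_sq_le_one (y j / 2), sq_nonneg (Real.cos (y j / 2))])
  have hup_int : Integrable (fun y => ∫ x, G (x, y) ∂μ1) ν := hGint.integral_prod_right
  have houter : C * (3 / 8 : ℝ) ^ N ≤ ∫ y, (∫ x, G (x, y) ∂μ1) ∂ν := by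
    calc C * (3 / 8 : ℝ) ^ N
        = C * (∫ x, Real.cos (x / 2) ^ 4 ∂μ1) ^ N := by rw [hcos4]
      _ = ∫ y, C * ∏ j, Real.cos (y j / 2) ^ 4 ∂ν := by
          rw [hν, ← integral_pi_pow_aux μ1 _ hcos4_int, ← integral_const_mul]
      _ ≤ ∫ y, (∫ x, G (x, y) ∂μ1) ∂ν := integral_mono hlow_int hup_int fun y => hinner y
  -- final numeric bound
  have hfinal : 25 / 512 * (1 / (L ^ 2 * (N : ℝ) ^ 2)) ≤ C * (3 / 8 : ℝ) ^ N := by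
    have hCs : C * (3 / 8 : ℝ) ^ N = (1 - s) ^ 2 / (2 * γ ^ 2) := by
      rw [hC, hαsq, ← hs]
      have h1Ene : (1 - E) ≠ 0 := by linarith
      field_simp
    rw [hCs, hγ]
    have hL2 : (0:ℝ) < L ^ 2 := by nlinarith
    have hNe : (N:ℝ) ≠ 0 := by positivity
    have hLe : L ≠ 0 := hLneg.ne
    rw [show (25:ℝ) / 512 * (1 / (L ^ 2 * (N : ℝ) ^ 2))
      = (25 / 64) / (2 * (2 * (N:ℝ) * L) ^ 2) from by field_simp; ring]
    have hD : (0:ℝ) < 2 * (2 * (N:ℝ) * L) ^ 2 := by nlinarith [hL2, hNR]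
    exact (div_le_div_iff_of_pos_right hD).mpr (by nlinarith [hs38])
  -- assemble
  rw [← hmp.integral_comp']
  rw [integral_congr_ae (Filter.Eventually.of_forall hGeq)]
  rw [integral_prod_symm _ hGint]
  exact le_trans hfinal houter
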